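/- (Scaling of non-microstate bi-free entropy.) With χ*(X⊔Y) defined via the integral of Fisher informations of semicircular perturbations, for every λ ∈ ℝ \ {0}: χ*(λX₁,…,λXₙ ⊔ λY₁,…,λYₘ) = (n+m)·log|λ| + χ*(X₁,…,Xₙ ⊔ Y₁,…,Yₘ). In abstract form: if h : (0,∞) → [0,∞] satisfies the scaled-Fisher relation h_λ(t) = λ^{−2}h(tλ^{−2}) and g_λ := c + (1/2)∫₀^∞[(n+m)/(1+t) − h_λ(t)]dt, then g_λ = g₁ + (n+m)log|λ| whenever g₁ > −∞. -/

import Mathlib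

open MeasureTheory Set Real

open Filter in
lemma aux_key (c a : ℝ) (hc : 0 ≤ c) (ha : 0 < a) :
    IntegrableOn (fun t => c/(1+t) - c/(a+t)) (Ioi 0) ∧
    ∫ t in Ioi (0:ℝ), (c/(1+t) - c/(a+t)) = c * Real.log a := by
  set F : ℝ → ℝ := fun t => c * (Real.log (1+t) - Real.log (a+t)) with hF
  have hderiv : ∀ t ∈ Ici (0:ℝ), HasDerivAt F (c/(1+t) - c/(a+t)) t := by
    intro t ht
    have h1 : (0:ℝ) < 1 + t := by have := ht.out; linarith
    have h2 : (0:ℝ) < a + t := by have := ht.out; linarith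
    have d1 : HasDerivAt (fun t : ℝ => Real.log (1+t)) (1/(1+t)) t := by
      simpa using ((hasDerivAt_id t).const_add 1).log h1.ne'
    have d2 : HasDerivAt (fun t : ℝ => Real.log (a+t)) (1/(a+t)) t := by
      simpa using ((hasDerivAt_id t).const_add a).log h2.ne'
    have := (d1.sub d2).const_mul c
    rw [show c/(1+t) - c/(a+t) = c * (1/(1+t) - 1/(a+t)) by ring]
    exact this
  have htend : Tendsto F atTop (nhds 0) := by
    have h2 : Tendsto (fun t:ℝ => a + t) atTop atTop :=
      tendsto_atTop_add_const_left _ a tendsto_id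
    have hr : Tendsto (fun t:ℝ => (1+t)/(a+t)) atTop (nhds 1) := by
      have h3 : Tendsto (fun t:ℝ => 1 + (1-a)/(a+t)) atTop (nhds (1+0)) :=
        (tendsto_const_nhds.div_atTop h2).const_add 1
      rw [add_zero] at h3
      refine h3.congr' ?_
      filter_upwards [eventually_gt_atTop 0] with t ht
      have h2' : a + t ≠ 0 := by linarith
      field_simp
      ring
    have hl : Tendsto (fun t:ℝ => Real.log ((1+t)/(a+t))) atTop (nhds (Real.log 1)) :=
      (Real.continuousAt_log one_ne_zero).tendsto.comp hr
    rw [Real.log_one] at hl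
    have := hl.const_mul c
    rw [mul_zero] at this
    refine this.congr' ?_
    filter_upwards [eventually_gt_atTop 0] with t ht
    have h1' : (1:ℝ) + t ≠ 0 := by linarith
    have h2' : a + t ≠ 0 := by linarith
    rw [hF]
    simp [Real.log_div h1' h2']
  have hF0 : F 0 = -(c * Real.log a) := by simp [hF]
  rcases le_or_gt 1 a with hle | hlt
  · have hpos : ∀ t ∈ Ioi (0:ℝ), 0 ≤ c/(1+t) - c/(a+t) := by
      intro t ht
      have h1 : (0:ℝ) < 1 + t := by have := ht.out; linarith
      have : c/(a+t) ≤ c/(1+t) := div_le_div_of_nonneg_left hc h1 (by linarith)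
      linarith
    refine ⟨integrableOn_Ioi_deriv_of_nonneg' hderiv hpos htend, ?_⟩
    rw [integral_Ioi_of_hasDerivAt_of_nonneg' hderiv hpos htend, hF0]
    ring
  · have hneg : ∀ t ∈ Ioi (0:ℝ), c/(1+t) - c/(a+t) ≤ 0 := by
      intro t ht
      have h2 : (0:ℝ) < a + t := by have := ht.out; linarith
      have : c/(1+t) ≤ c/(a+t) := div_le_div_of_nonneg_left hc h2 (by linarith)
      linarith
    refine ⟨integrableOn_Ioi_deriv_of_nonpos' hderiv hneg htend, ?_⟩
    rw [integral_Ioi_of_hasDerivAt_of_nonpos' hderiv hneg htend, hF0]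
    ring


/-- Scaling of non-microstate bi-free entropy,
`χ*(λX ⊔ λY) = (n+m)·log|λ| + χ*(X ⊔ Y)`, in abstract form: if the Fisher
information `h` along the semicircular flow is scaled to `h_λ(t) = λ⁻²·h(t·λ⁻²)`
and `g_λ := ((n+m)/2)log(2πe) + (1/2)∫₀^∞[(n+m)/(1+t) − h_λ(t)]dt`, then
`g_λ = g₁ + (n+m)·log|λ|` whenever `g₁ > −∞` (i.e. whenever the integrand for
`λ = 1` is integrable). -/
theorem stmt11 (n m : ℕ) (lam : ℝ) (hlam : lam ≠ 0) (h : ℝ → ℝ)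
    (hnn : ∀ t > (0:ℝ), 0 ≤ h t)
    (hint : IntegrableOn (fun t => (n+m : ℝ)/(1+t) - h t) (Ioi 0)) :
    IntegrableOn (fun t => (n+m : ℝ)/(1+t) - (lam^2)⁻¹ * h (t * (lam^2)⁻¹)) (Ioi 0) ∧
    (n+m : ℝ)/2 * Real.log (2 * π * Real.exp 1)
        + (1/2) * ∫ t in Ioi (0:ℝ), ((n+m : ℝ)/(1+t) - (lam^2)⁻¹ * h (t * (lam^2)⁻¹))
      = ((n+m : ℝ)/2 * Real.log (2 * π * Real.exp 1)
          + (1/2) * ∫ t in Ioi (0:ℝ), ((n+m : ℝ)/(1+t) - h t))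
        + (n+m : ℝ) * Real.log |lam| := by
  set c : ℝ := (n+m : ℝ) with hc
  have hc0 : 0 ≤ c := by positivity
  set a : ℝ := lam^2 with haa
  have ha : 0 < a := by positivity
  set f : ℝ → ℝ := fun t => c/(1+t) - h t with hf
  have hai : 0 < a⁻¹ := inv_pos.mpr ha
  -- integrability of scaled f
  have hA : IntegrableOn (fun t => a⁻¹ * f (t * a⁻¹)) (Ioi 0) := by
    have := (integrableOn_Ioi_comp_mul_right_iff f 0 hai).mpr (by simpa using hint)
    exact this.const_mul a⁻¹
  obtain ⟨hB, hBval⟩ := aux_key c a hc0 ha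
  have key : ∀ t : ℝ, a⁻¹ * (c/(1+t*a⁻¹)) = c/(a+t) := by
    intro t
    rcases eq_or_ne (a + t) 0 with h0 | h0
    · have ht : t = -a := by linarith
      have h1 : 1 + t * a⁻¹ = 0 := by rw [ht]; field_simp; norm_num
      simp [h0, h1]
    · have hrw : 1 + t * a⁻¹ = (a + t) * a⁻¹ := by
        field_simp
      have h1 : 1 + t * a⁻¹ ≠ 0 := by
        rw [hrw]; exact mul_ne_zero h0 (inv_ne_zero ha.ne')
      field_simp
  have heq : (fun t => c/(1+t) - a⁻¹ * h (t * a⁻¹))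
      = fun t => a⁻¹ * f (t * a⁻¹) + (c/(1+t) - c/(a+t)) := by
    funext t
    rw [hf]
    simp only [mul_sub, key t]
    ring
  constructor
  · rw [heq]
    exact hA.add hB
  · have hI : (∫ t in Ioi (0:ℝ), (c/(1+t) - a⁻¹ * h (t * a⁻¹)))
        = (∫ t in Ioi (0:ℝ), f t) + c * Real.log a := by
      rw [heq, integral_add hA hB, hBval, integral_const_mul,
        integral_comp_mul_right_Ioi f 0 hai]
      simp only [zero_mul, inv_inv, smul_eq_mul]
      rw [← mul_assoc, inv_mul_cancel₀ ha.ne', one_mul]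
    rw [hI]
    have hla : Real.log a = 2 * Real.log |lam| := by
      rw [haa, ← sq_abs, sq, Real.log_mul (abs_ne_zero.mpr hlam) (abs_ne_zero.mpr hlam)]
      ring
    rw [hla, hf]
    ring
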